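/- Character-level local lexing recovers the grammar's language: let G = (𝔑, 𝔗, ℜ, 𝔖) be a context-free grammar, take Σ = 𝔗, and define the local lexing ℓℓ = (Lex, Sel) by Lex(t)(D, k) = {(t, t)} if k < |D| and D_k = t, and Lex(t)(D, k) = ∅ otherwise, with Sel(A, B) = B (the selector induced by the empty order). Then for every D ∈ 𝔗*, ℓℓ(D) ≠ ∅ if and only if D ∈ ℒ; i.e., ℒ_Σ = ℒ. -/
import Mathlib


namespace LL
section Defs

/-- A context-free grammar `(𝔑, 𝔗, ℜ, 𝔖)`: nonterminals are the type `N`,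
terminals the type `T` (automatically disjoint), `rules ⊆ 𝔑 × (𝔑 ∪ 𝔗)*`,
and `start ∈ 𝔑`. -/
structure CFG (N T : Type*) where
  rules : Set (N × List (N ⊕ T))
  start : N

variable {N T C : Type*}

/-- One derivation step `α ⇒ β`. -/
def CFG.Step (G : CFG N T) (α β : List (N ⊕ T)) : Prop :=
  ∃ a A b γ, α = a ++ Sum.inl A :: b ∧ β = a ++ γ ++ b ∧ (A, γ) ∈ G.rules

/-- `⇒*`, the reflexive transitive closure of `⇒`. -/
def CFG.Derives (G : CFG N T) : List (N ⊕ T) → List (N ⊕ T) → Prop :=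
  Relation.ReflTransGen G.Step

/-- `ℒ = { w ∈ 𝔗* | 𝔖 ⇒* w }`. -/
def CFG.lang (G : CFG N T) : Set (List T) :=
  {w | G.Derives [Sum.inl G.start] (w.map Sum.inr)}

/-- `ℒ_prefix = { w ∈ 𝔗* | ∃ α. 𝔖 ⇒* w α }`. -/
def CFG.langPrefix (G : CFG N T) : Set (List T) :=
  {w | ∃ α, G.Derives [Sum.inl G.start] (w.map Sum.inr ++ α)}

/-- A token is a pair `(t, c) ∈ 𝔗 × Σ*`. -/
abbrev Token (T C : Type*) := T × List C

/-- `p̄`, the characters of a token sequence. -/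
def chars (p : List (Token T C)) : List C := (p.map Prod.snd).flatten

/-- `[p]`, the terminals of a token sequence. -/
def terms (p : List (Token T C)) : List T := p.map Prod.fst

/-- `limit f X = ⋃ n, fⁿ(X)`. -/
def limit {α : Type*} (f : Set α → Set α) (X : Set α) : Set α := ⋃ n, f^[n] X

/-- A local lexing `(Lex, Sel)` with respect to terminals `T` and characters `C`. -/
structure LocalLexing (T C : Type*) where
  Lex : T → List C → ℕ → Set (Token T C)
  Sel : Set (Token T C) → Set (Token T C) → Set (Token T C)
  lex_sound : ∀ t D k, ∀ x ∈ Lex t D k,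
      x.1 = t ∧ k + x.2.length ≤ D.length ∧ x.2 <+: D.drop k
  sel_sound : ∀ A B : Set (Token T C), A ⊆ B → A ⊆ Sel A B ∧ Sel A B ⊆ B

variable (G : CFG N T) (ll : LocalLexing T C) (D : List C)

/-- `𝒳ₖ = { x | x ∈ Lex([x])(D, k) }`. -/
def Xtok (k : ℕ) : Set (Token T C) := {x | x ∈ ll.Lex x.1 D k}

/-- `𝒲` of a path set `P` at position `k`:
`{ x ∈ 𝒳ₖ | ∃ p ∈ P. |p̄| = k ∧ [p x] ∈ ℒ_prefix }`. -/
def Wtok (P : Set (List (Token T C))) (k : ℕ) : Set (Token T C) :=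
  {x | x ∈ Xtok ll D k ∧ ∃ p ∈ P, (chars p).length = k ∧ terms (p ++ [x]) ∈ G.langPrefix}

/-- `Appendₖ T P = P ∪ { p t | p ∈ P ∧ |p̄| = k ∧ t ∈ T ∧ [p t] ∈ ℒ_prefix }`. -/
def Append (k : ℕ) (Ts : Set (Token T C)) (P : Set (List (Token T C))) :
    Set (List (Token T C)) :=
  P ∪ {q | ∃ p ∈ P, ∃ t ∈ Ts, q = p ++ [t] ∧ (chars p).length = k ∧ terms q ∈ G.langPrefix}

/-- The pair `(𝒫ₖᵘ, 𝒵ₖᵘ)`, starting from the path set `P₀` at position `k`: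
`𝒵ₖ⁰ = ∅`, `𝒵ₖᵘ⁺¹ = Sel(𝒵ₖᵘ, 𝒲ₖᵘ⁺¹)` and `𝒫ₖᵘ⁺¹ = limit (Appendₖ 𝒵ₖᵘ⁺¹) 𝒫ₖᵘ`. -/
def Pstage (k : ℕ) (P₀ : Set (List (Token T C))) :
    ℕ → Set (List (Token T C)) × Set (Token T C)
  | 0 => (P₀, ∅)
  | u + 1 =>
      let PZ := Pstage k P₀ u
      let Z := ll.Sel PZ.2 (Wtok G ll D PZ.1 k)
      (limit (Append G k Z) PZ.1, Z)

/-- `𝒫ₖ⁰`:  `𝒫₀⁰ = {ε}` and `𝒫ₖ₊₁⁰ = 𝒫ₖ^∞`. -/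
def Pinit : ℕ → Set (List (Token T C))
  | 0 => {[]}
  | k + 1 => ⋃ u, (Pstage G ll D k (Pinit k) u).1

/-- The path sets `𝒫ₖᵘ`. -/
def Pset (k u : ℕ) : Set (List (Token T C)) := (Pstage G ll D k (Pinit G ll D k) u).1

/-- The selected token sets `𝒵ₖᵘ`. -/
def Zset (k u : ℕ) : Set (Token T C) := (Pstage G ll D k (Pinit G ll D k) u).2

/-- The admissible token sets `𝒲ₖᵘ`. -/
def Wset (k u : ℕ) : Set (Token T C) := Wtok G ll D (Pset G ll D k u) k

/-- `𝒵ₖ^∞ = ⋃ u, 𝒵ₖᵘ`. -/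
def Zinf (k : ℕ) : Set (Token T C) := ⋃ u, Zset G ll D k u

/-- `𝕻 = 𝒫_{|D|}^∞`. -/
def PP : Set (List (Token T C)) := ⋃ u, Pset G ll D D.length u

/-- `ℓℓ(D) = { p ∈ 𝕻 | |p̄| = |D| ∧ [p] ∈ ℒ }`. -/
def sem : Set (List (Token T C)) :=
  {p | p ∈ PP G ll D ∧ (chars p).length = D.length ∧ terms p ∈ G.lang}

/-- An Earley item `(lhs → pre • post, origin, bin)`. -/
structure EItem (N T : Type*) where
  lhs : N
  pre : List (N ⊕ T)
  post : List (N ⊕ T)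
  origin : ℕ
  bin : ℕ

/-- `Init = { (𝔖 → • α, 0, 0) | (𝔖 → α) ∈ ℜ }`. -/
def EInit : Set (EItem N T) :=
  {x | ∃ α, (G.start, α) ∈ G.rules ∧ x = ⟨G.start, [], α, 0, 0⟩}

/-- The `Predict` operator. -/
def Predict (k : ℕ) (I : Set (EItem N T)) : Set (EItem N T) :=
  I ∪ {x | ∃ M γ, (M, γ) ∈ G.rules ∧
        (∃ N' α β i, (⟨N', α, Sum.inl M :: β, i, k⟩ : EItem N T) ∈ I) ∧
        x = ⟨M, [], γ, k, k⟩}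

/-- The `Complete` operator. -/
def Complete (k : ℕ) (I : Set (EItem N T)) : Set (EItem N T) :=
  I ∪ {x | ∃ N' α M β i j γ,
        (⟨N', α, Sum.inl M :: β, i, j⟩ : EItem N T) ∈ I ∧
        (⟨M, γ, [], j, k⟩ : EItem N T) ∈ I ∧
        x = ⟨N', α ++ [Sum.inl M], β, i, k⟩}

/-- The token-based `Scan` operator. -/
def Scan (Ts : Set (Token T C)) (k : ℕ) (I : Set (EItem N T)) : Set (EItem N T) :=
  I ∪ {x | ∃ N' α X c β i, (X, c) ∈ Ts ∧
        (⟨N', α, Sum.inr X :: β, i, k⟩ : EItem N T) ∈ I ∧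
        x = ⟨N', α ++ [Sum.inr X], β, i, k + c.length⟩}

/-- `Tokens T k I = Sel(T, { x | ∃ X N α β i. (N → α • X β, i, k) ∈ I ∧ x ∈ Lex(X)(D, k) })`. -/
def Tokens (Ts : Set (Token T C)) (k : ℕ) (I : Set (EItem N T)) : Set (Token T C) :=
  ll.Sel Ts {x | ∃ X N' α β i, (⟨N', α, Sum.inr X :: β, i, k⟩ : EItem N T) ∈ I ∧
        x ∈ ll.Lex X D k}

/-- `πₖ T I = limit (Scan T k ∘ Complete k ∘ Predict k) I`. -/
def pik (Ts : Set (Token T C)) (k : ℕ) (I : Set (EItem N T)) : Set (EItem N T) :=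
  limit (fun J => Scan Ts k (Complete k (Predict G k J))) I

/-- The pair `(𝔍ₖᵘ, 𝒯ₖᵘ)`, starting from the item set `J₀` at position `k`:
`𝒯ₖ⁰ = ∅`, `𝒯ₖᵘ⁺¹ = Tokens 𝒯ₖᵘ k 𝔍ₖᵘ` and `𝔍ₖᵘ⁺¹ = πₖ 𝒯ₖᵘ⁺¹ 𝔍ₖᵘ`. -/
def Jstage (k : ℕ) (J₀ : Set (EItem N T)) : ℕ → Set (EItem N T) × Set (Token T C)
  | 0 => (J₀, ∅)
  | u + 1 =>
      let JT := Jstage k J₀ u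
      let T' := Tokens ll D JT.2 k JT.1
      (pik G T' k JT.1, T')

/-- `𝔍ₖ⁰`:  `𝔍₀⁰ = π₀ ∅ Init` and `𝔍ₖ₊₁⁰ = πₖ₊₁ ∅ 𝓘ₖ`. -/
def Jinit : ℕ → Set (EItem N T)
  | 0 => pik G (∅ : Set (Token T C)) 0 (EInit G)
  | k + 1 => pik G (∅ : Set (Token T C)) (k + 1) (⋃ u, (Jstage G ll D k (Jinit k) u).1)

/-- The item sets `𝔍ₖᵘ`. -/
def Jset (k u : ℕ) : Set (EItem N T) := (Jstage G ll D k (Jinit G ll D k) u).1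

/-- The token sets `𝒯ₖᵘ`. -/
def Tset (k u : ℕ) : Set (Token T C) := (Jstage G ll D k (Jinit G ll D k) u).2

/-- `𝓘ₖ = ⋃ u, 𝔍ₖᵘ`. -/
def Ibin (k : ℕ) : Set (EItem N T) := ⋃ u, Jset G ll D k u

/-- `𝕴 = 𝓘_{|D|}`. -/
def Items : Set (EItem N T) := Ibin G ll D D.length

/-- An item `(N → α • β, i, j)` is `p`-valid. -/
def pValid (p : List (Token T C)) (x : EItem N T) : Prop :=
  (x.lhs, x.pre ++ x.post) ∈ G.rules ∧
  ∃ u ≤ p.length, ∃ γ,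
    (chars p).length = x.bin ∧
    (chars (p.take u)).length = x.origin ∧
    G.Derives [Sum.inl G.start] ((terms (p.take u)).map Sum.inr ++ Sum.inl x.lhs :: γ) ∧
    G.Derives x.pre ((terms (p.drop u)).map Sum.inr)

/-- `⟨P⟩ = { x | ∃ p ∈ P. x is p-valid }`. -/
def Gen (P : Set (List (Token T C))) : Set (EItem N T) :=
  {x | ∃ p ∈ P, pValid G p x}

/-- The canonical path: the first `m` characters of `D`, each as its own token. -/
def canon (D : List T) (m : ℕ) : List (Token T T) := (D.take m).map (fun t => (t, [t]))

lemma flatten_singleton (l : List T) : (l.map (fun t => ([t] : List T))).flatten = l := by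
  induction l <;> simp [*]

lemma chars_canon (D : List T) (m : ℕ) : chars (canon D m) = D.take m := by
  simp only [chars, canon, List.map_map]
  exact flatten_singleton _

lemma terms_canon (D : List T) (m : ℕ) : terms (canon D m) = D.take m := by
  simp [terms, canon, Function.comp_def]

lemma canon_succ (D : List T) (k : ℕ) (hk : k < D.length) :
    canon D (k + 1) = canon D k ++ [(D[k], [D[k]])] := by
  unfold canon
  rw [List.take_succ, List.getElem?_eq_getElem hk]
  simp only [Option.toList_some, List.map_append, List.map_cons, List.map_nil]

/-- The set of canonical paths. -/
def IsCanon (D : List T) : Set (List (Token T T)) :=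
  {p | ∃ m ≤ D.length, p = canon D m}

lemma mem_Xtok_iff {ll : LocalLexing T T}
    (hLex : ∀ (t : T) (E : List T) (k : ℕ),
      ll.Lex t E k = {x | E[k]? = some t ∧ x = (t, [t])})
    (D : List T) (k : ℕ) (x : Token T T) :
    x ∈ Xtok ll D k ↔ D[k]? = some x.1 ∧ x = (x.1, [x.1]) := by
  simp [Xtok, hLex]

lemma limit_subset {α : Type*} (f : Set α → Set α) (X S : Set α)
    (hX : X ⊆ S) (hf : ∀ Y ⊆ S, f Y ⊆ S) : limit f X ⊆ S := by
  intro a ha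
  rcases Set.mem_iUnion.1 ha with ⟨n, hn⟩
  have : ∀ n, f^[n] X ⊆ S := by
    intro n
    induction n with
    | zero => exact hX
    | succ n ih => rw [Function.iterate_succ']; exact hf _ ih
  exact this n hn

lemma append_canon {G : CFG N T} (D : List T) (k : ℕ) (Ts : Set (Token T T))
    (hTs : ∀ x ∈ Ts, D[k]? = some x.1 ∧ x = (x.1, [x.1]))
    (P : Set (List (Token T T))) (hP : P ⊆ IsCanon D) :
    Append G k Ts P ⊆ IsCanon D := by
  intro q hq
  rcases hq with hq | ⟨p, hp, t, ht, rfl, hlen, -⟩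
  · exact hP hq
  · rcases hP hp with ⟨m, hm, rfl⟩
    have hml : (chars (canon D m)).length = m := by
      rw [chars_canon]; simpa using hm
    have hmk : m = k := by rw [hml] at hlen; exact hlen
    rcases hTs t ht with ⟨hget, htt⟩
    rcases List.getElem?_eq_some_iff.1 hget with ⟨hk, hDk⟩
    refine ⟨k + 1, hk, ?_⟩
    rw [canon_succ D k hk, hmk]
    rw [hDk, ← htt]

lemma pstage_canon {G : CFG N T} {ll : LocalLexing T T}
    (hLex : ∀ (t : T) (E : List T) (k : ℕ),
      ll.Lex t E k = {x | E[k]? = some t ∧ x = (t, [t])})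
    (hSel : ∀ A B : Set (Token T T), ll.Sel A B = B)
    (D : List T) (k : ℕ) (P₀ : Set (List (Token T T))) (hP : P₀ ⊆ IsCanon D) :
    ∀ u, (Pstage G ll D k P₀ u).1 ⊆ IsCanon D := by
  intro u
  induction u with
  | zero => exact hP
  | succ u ih =>
    show limit (Append G k (ll.Sel _ (Wtok G ll D (Pstage G ll D k P₀ u).1 k))) _ ⊆ _
    rw [hSel]
    refine limit_subset _ _ _ ih ?_
    intro Y hY
    refine append_canon D k _ ?_ Y hY
    intro x hx
    exact (mem_Xtok_iff hLex D k x).1 hx.1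

lemma pinit_canon {G : CFG N T} {ll : LocalLexing T T}
    (hLex : ∀ (t : T) (E : List T) (k : ℕ),
      ll.Lex t E k = {x | E[k]? = some t ∧ x = (t, [t])})
    (hSel : ∀ A B : Set (Token T T), ll.Sel A B = B)
    (D : List T) : ∀ k, Pinit G ll D k ⊆ IsCanon D := by
  intro k
  induction k with
  | zero =>
    intro p hp
    rcases hp with rfl
    exact ⟨0, Nat.zero_le _, by simp [canon]⟩
  | succ k ih =>
    intro p hp
    rcases Set.mem_iUnion.1 hp with ⟨u, hu⟩
    exact pstage_canon hLex hSel D k _ ih u hu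

lemma take_mem_langPrefix {G : CFG N T} {D : List T} (h : D ∈ G.lang) (n : ℕ) :
    D.take n ∈ G.langPrefix := by
  refine ⟨(D.drop n).map Sum.inr, ?_⟩
  rw [← List.map_append, List.take_append_drop]
  exact h

lemma canon_mem_pinit {G : CFG N T} {ll : LocalLexing T T}
    (hLex : ∀ (t : T) (E : List T) (k : ℕ),
      ll.Lex t E k = {x | E[k]? = some t ∧ x = (t, [t])})
    (hSel : ∀ A B : Set (Token T T), ll.Sel A B = B)
    {D : List T} (hD : D ∈ G.lang) :
    ∀ k ≤ D.length, canon D k ∈ Pinit G ll D k := by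
  intro k
  induction k with
  | zero => intro _; simp [Pinit, canon]
  | succ k ih =>
    intro hk1
    have hk : k < D.length := hk1
    have hmem : canon D k ∈ Pinit G ll D k := ih (Nat.le_of_lt hk)
    refine Set.mem_iUnion.2 ⟨1, ?_⟩
    show canon D (k + 1) ∈
      limit (Append G k (ll.Sel (Pstage G ll D k (Pinit G ll D k) 0).2
        (Wtok G ll D (Pstage G ll D k (Pinit G ll D k) 0).1 k))) _
    have hcl : (chars (canon D k)).length = k := by
      rw [chars_canon]; simpa using Nat.le_of_lt hk
    have hx : (D[k], ([D[k]] : List T)) ∈ Xtok ll D k :=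
      (mem_Xtok_iff hLex D k _).2 ⟨List.getElem?_eq_getElem hk, rfl⟩
    have htq : terms (canon D k ++ [(D[k], ([D[k]] : List T))]) = D.take (k + 1) := by
      rw [← canon_succ D k hk, terms_canon]
    have hW : (D[k], ([D[k]] : List T)) ∈
        Wtok G ll D (Pstage G ll D k (Pinit G ll D k) 0).1 k := by
      refine ⟨hx, canon D k, hmem, hcl, ?_⟩
      rw [htq]
      exact take_mem_langPrefix hD (k + 1)
    refine Set.mem_iUnion.2 ⟨1, ?_⟩
    rw [Function.iterate_one]
    refine Or.inr ⟨canon D k, hmem, (D[k], ([D[k]] : List T)), ?_, ?_, hcl, ?_⟩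
    · rw [hSel]; exact hW
    · exact canon_succ D k hk
    · rw [terms_canon]; exact take_mem_langPrefix hD (k + 1)

/-- Character-level local lexing recovers the grammar's language: with `Σ = 𝔗`,
`Lex(t)(D, k) = {(t, t)}` if `k < |D| ∧ D_k = t` (and `∅` otherwise), and
`Sel(A, B) = B`, we have `ℓℓ(D) ≠ ∅` iff `D ∈ ℒ`. -/
theorem char_lexing_lang {N T : Type*} (G : CFG N T) (ll : LocalLexing T T)
    (hLex : ∀ (t : T) (E : List T) (k : ℕ),
      ll.Lex t E k = {x | E[k]? = some t ∧ x = (t, [t])})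
    (hSel : ∀ A B : Set (Token T T), ll.Sel A B = B)
    (D : List T) :
    sem G ll D ≠ ∅ ↔ D ∈ G.lang := by
  rw [← Set.nonempty_iff_ne_empty]
  constructor
  · rintro ⟨p, hPP, hlen, hterm⟩
    rcases Set.mem_iUnion.1 hPP with ⟨u, hu⟩
    rcases pstage_canon hLex hSel D D.length _ (pinit_canon hLex hSel D D.length) u hu
      with ⟨m, hm, rfl⟩
    have hmD : m = D.length := by
      rw [chars_canon] at hlen
      simpa [min_eq_left hm] using hlen
    rw [terms_canon, hmD, List.take_length] at hterm
    exact hterm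
  · intro hD
    refine ⟨canon D D.length, ?_, ?_, ?_⟩
    · exact Set.mem_iUnion.2 ⟨0, canon_mem_pinit hLex hSel hD D.length le_rfl⟩
    · rw [chars_canon]; simp
    · rw [terms_canon, List.take_length]; exact hD

end Defs
end LL
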